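/- Let {φ_k}_{k≥1} be an orthonormal basis of L²(I), let (κ_k)_{k≥1} be positive reals with Σ_k κ_k² < ∞ and κ_k → 0, let K = Σ_k κ_k φ_k⊗φ_k in L²(I²), let b ∈ L²(I²), and define C ∈ L²(I²) by C(t,s) = ∫_I K(t,u) b(s,u) du. For N ≥ 2 set b^N = b + φ₁⊗φ_N and C^N = C + κ_N φ_N⊗φ₁ (where (f⊗g)(t,s)=f(t)g(s)). Then: (1) ∫_I K(t,u) b^N(s,u) du = C^N(t,s) for almost every (s,t); (2) |||C^N − C||| = κ_N, so C^N → C in L²(I²) as N → ∞; and (3) |||b^N − b||| = 1 for every N. Hence recovering b from (K, C) is an ill-posed inverse problem. -/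

import Mathlib

open MeasureTheory Filter

noncomputable section

/-- Lebesgue measure on the unit interval `I = [0,1]`. -/
def μI : Measure ℝ := MeasureTheory.volume.restrict (Set.Icc 0 1)

/-- The `L²(I)` inner product `⟨f, g⟩ = ∫_I f g`. -/
def ip (f g : ℝ → ℝ) : ℝ := ∫ t, f t * g t ∂μI

instance : IsProbabilityMeasure μI := ⟨by simp [μI, Real.volume_Icc]⟩

/-- Cauchy–Schwarz for integrals of real functions. -/
lemma integral_mul_sq_le_cs {α : Type*} [MeasurableSpace α] {μ : Measure α} {f g : α → ℝ}
    (hf : MemLp f 2 μ) (hg : MemLp g 2 μ) :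
    (∫ x, f x * g x ∂μ) ^ 2 ≤ (∫ x, f x ^ 2 ∂μ) * (∫ x, g x ^ 2 ∂μ) := by
  set F := hf.toLp f with hF
  set G := hg.toLp g with hG
  have hFf := hf.coeFn_toLp
  have hGg := hg.coeFn_toLp
  have hin : ∀ u v : Lp ℝ 2 μ, (inner ℝ u v : ℝ) = ∫ x, u x * v x ∂μ := fun u v => by
    rw [MeasureTheory.L2.inner_def]; simp [RCLike.inner_apply, mul_comm]
  have h1 : (inner ℝ F G : ℝ) = ∫ x, f x * g x ∂μ := by
    rw [hin]; exact integral_congr_ae (hFf.mul hGg)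
  have h2 : (inner ℝ F F : ℝ) = ∫ x, f x ^ 2 ∂μ := by
    rw [hin]
    refine integral_congr_ae ?_
    filter_upwards [hFf] with x hx
    rw [hx, ← pow_two]
  have h3 : (inner ℝ G G : ℝ) = ∫ x, g x ^ 2 ∂μ := by
    rw [hin]
    refine integral_congr_ae ?_
    filter_upwards [hGg] with x hx
    rw [hx, ← pow_two]
  have habs := abs_real_inner_le_norm F G
  have hsq : (inner ℝ F G : ℝ) ^ 2 ≤ (‖F‖ * ‖G‖) ^ 2 := by
    have h := abs_le.mp habs
    exact sq_le_sq' (by linarith [h.1]) h.2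
  calc (∫ x, f x * g x ∂μ) ^ 2 = (inner ℝ F G : ℝ) ^ 2 := by rw [h1]
    _ ≤ (‖F‖ * ‖G‖) ^ 2 := hsq
    _ = (inner ℝ F F : ℝ) * (inner ℝ G G : ℝ) := by
        rw [mul_pow, ← real_inner_self_eq_norm_sq, ← real_inner_self_eq_norm_sq]
    _ = _ := by rw [h2, h3]

/-- The product of two `L²` functions is integrable. -/
lemma integrable_mul_of_memℒp_two {α : Type*} [MeasurableSpace α] {μ : Measure α} {f g : α → ℝ}
    (hf : MemLp f 2 μ) (hg : MemLp g 2 μ) : Integrable (fun x => f x * g x) μ := by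
  have hint := (hf.integrable_sq.add hg.integrable_sq).div_const 2
  refine hint.mono' (hf.1.mul hg.1) (Eventually.of_forall fun x => ?_)
  rw [Real.norm_eq_abs, abs_mul]
  simp only [Pi.add_apply]
  nlinarith [sq_nonneg (|f x| - |g x|), sq_abs (f x), sq_abs (g x),
    abs_nonneg (f x), abs_nonneg (g x)]

lemma ae_snd_lift {P : ℝ → Prop} (h : ∀ᵐ t ∂μI, P t) : ∀ᵐ p ∂(μI.prod μI), P p.2 := by
  have hmap : Measure.map Prod.snd (μI.prod μI) = μI := by
    rw [Measure.map_snd_prod]; simp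
  exact ae_of_ae_map measurable_snd.aemeasurable (by rwa [hmap])

lemma ae_fst_lift {P : ℝ → Prop} (h : ∀ᵐ t ∂μI, P t) : ∀ᵐ p ∂(μI.prod μI), P p.1 := by
  have hmap : Measure.map Prod.fst (μI.prod μI) = μI := by
    rw [Measure.map_fst_prod]; simp
  exact ae_of_ae_map measurable_fst.aemeasurable (by rwa [hmap])

/-- Key step: the kernel `K` acts on `φ N` as multiplication by the eigenvalue `κ N`
(almost everywhere), as a consequence of the `L²` expansion of `K`. -/
lemma key_convergence
    (φ : ℕ → ℝ → ℝ) (hφmeas : ∀ k, Measurable (φ k)) (hφL2 : ∀ k, MemLp (φ k) 2 μI)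
    (hφon : ∀ j k, ip (φ j) (φ k) = if j = k then 1 else 0)
    (κ : ℕ → ℝ)
    (K : ℝ → ℝ → ℝ) (hKmeas : Measurable (fun p : ℝ × ℝ => K p.1 p.2))
    (hKL2 : MemLp (fun p : ℝ × ℝ => K p.1 p.2) 2 (μI.prod μI))
    (hKexp : Tendsto
      (fun M => ∫ p, (K p.1 p.2 - ∑ k ∈ Finset.range M, κ k * φ k p.1 * φ k p.2) ^ 2
        ∂(μI.prod μI)) atTop (nhds 0))
    (N : ℕ) :
    ∀ᵐ t ∂μI, (∫ u, K t u * φ N u ∂μI) = κ N * φ N t := by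
  set S : ℕ → ℝ × ℝ → ℝ := fun M p => ∑ k ∈ Finset.range M, κ k * φ k p.1 * φ k p.2 with hS
  set h : ℝ → ℝ := fun t => ∫ u, K t u * φ N u ∂μI with hh
  have hKslice : ∀ t, Measurable fun u => K t u := fun t => hKmeas.comp measurable_prodMk_left
  have hφsq : ∀ k, ∫ u, φ k u ^ 2 ∂μI = 1 := by
    intro k
    have := hφon k k
    simp only [if_pos rfl, ip] at this
    simpa [pow_two] using this
  -- S is measurable and in L²
  have hSmeas : ∀ M, Measurable (S M) := by
    intro M
    apply Finset.measurable_sum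
    intro k _
    exact (measurable_const.mul ((hφmeas k).comp measurable_fst)).mul
      ((hφmeas k).comp measurable_snd)
  have hSL2 : ∀ M, MemLp (S M) 2 (μI.prod μI) := by
    intro M
    apply memLp_finset_sum
    intro k _
    have hm : AEStronglyMeasurable (fun p : ℝ × ℝ => κ k * φ k p.1 * φ k p.2) (μI.prod μI) :=
      ((measurable_const.mul ((hφmeas k).comp measurable_fst)).mul
        ((hφmeas k).comp measurable_snd)).aestronglyMeasurable
    rw [memLp_two_iff_integrable_sq hm]
    have he : (fun p : ℝ × ℝ => (κ k * φ k p.1 * φ k p.2) ^ 2)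
        = fun p : ℝ × ℝ => (κ k ^ 2 * φ k p.1 ^ 2) * (φ k p.2 ^ 2) := by
      funext p; ring
    rw [he]
    exact (((hφL2 k).integrable_sq).const_mul _).mul_prod ((hφL2 k).integrable_sq)
  have hDL2 : ∀ M, MemLp (fun p : ℝ × ℝ => K p.1 p.2 - S M p) 2 (μI.prod μI) :=
    fun M => hKL2.sub (hSL2 M)
  have hD2int : ∀ M, Integrable (fun p : ℝ × ℝ => (K p.1 p.2 - S M p) ^ 2) (μI.prod μI) :=
    fun M => (hDL2 M).integrable_sq
  have hgint : ∀ M, Integrable (fun t => ∫ u, (K t u - S M (t, u)) ^ 2 ∂μI) μI :=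
    fun M => (hD2int M).integral_prod_left
  have hgeq : ∀ M, ∫ t, (∫ u, (K t u - S M (t, u)) ^ 2 ∂μI) ∂μI
      = ∫ p, (K p.1 p.2 - S M p) ^ 2 ∂(μI.prod μI) :=
    fun M => integral_integral (hD2int M)
  -- K slices in L² a.e.
  have hKsliceL2 : ∀ᵐ t ∂μI, MemLp (fun u => K t u) 2 μI := by
    filter_upwards [hKL2.integrable_sq.prod_right_ae] with t ht
    exact (memLp_two_iff_integrable_sq (hKslice t).aestronglyMeasurable).2 ht
  -- S slices in L² everywhere
  have hSsliceL2 : ∀ M t, MemLp (fun u => S M (t, u)) 2 μI := by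
    intro M t
    exact memLp_finset_sum (Finset.range M) fun k _ => (hφL2 k).const_mul (κ k * φ k t)
  -- integral of S against φN
  have hSval : ∀ M, N < M → ∀ t, ∫ u, S M (t, u) * φ N u ∂μI = κ N * φ N t := by
    intro M hM t
    have he : (fun u => S M (t, u) * φ N u)
        = fun u => ∑ k ∈ Finset.range M, (κ k * φ k t) * (φ k u * φ N u) := by
      funext u
      rw [hS]
      simp only [Finset.sum_mul]
      exact Finset.sum_congr rfl fun k _ => by ring
    rw [he, integral_finset_sum]
    · have hterm : ∀ k ∈ Finset.range M,
          ∫ u, (κ k * φ k t) * (φ k u * φ N u) ∂μI = if k = N then κ N * φ N t else 0 := by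
        intro k _
        rw [integral_const_mul]
        have : ∫ u, φ k u * φ N u ∂μI = if k = N then 1 else 0 := hφon k N
        rw [this]
        split
        · rename_i hk; subst hk; ring
        · ring
      rw [Finset.sum_congr rfl hterm, Finset.sum_ite_eq' (Finset.range M) N
        (fun _ => κ N * φ N t), if_pos (Finset.mem_range.mpr hM)]
    · intro k _
      exact (integrable_mul_of_memℒp_two (hφL2 k) (hφL2 N)).const_mul _
  -- a.e. pointwise squared-error bound
  have hbound : ∀ M, N < M → ∀ᵐ t ∂μI,
      (h t - κ N * φ N t) ^ 2 ≤ ∫ u, (K t u - S M (t, u)) ^ 2 ∂μI := by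
    intro M hM
    filter_upwards [hKsliceL2] with t ht
    have hDslice : MemLp (fun u => K t u - S M (t, u)) 2 μI := ht.sub (hSsliceL2 M t)
    have intKφ : Integrable (fun u => K t u * φ N u) μI :=
      integrable_mul_of_memℒp_two ht (hφL2 N)
    have intSφ : Integrable (fun u => S M (t, u) * φ N u) μI :=
      integrable_mul_of_memℒp_two (hSsliceL2 M t) (hφL2 N)
    have h1 : h t - κ N * φ N t = ∫ u, (K t u - S M (t, u)) * φ N u ∂μI := by
      rw [hh]
      simp only
      rw [← hSval M hM t, ← integral_sub intKφ intSφ]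
      congr 1; funext u; ring
    rw [h1]
    calc (∫ u, (K t u - S M (t, u)) * φ N u ∂μI) ^ 2
        ≤ (∫ u, (K t u - S M (t, u)) ^ 2 ∂μI) * (∫ u, φ N u ^ 2 ∂μI) :=
          integral_mul_sq_le_cs hDslice (hφL2 N)
      _ = _ := by rw [hφsq N, mul_one]
  -- the squared error is integrable
  have hmeas_h : AEStronglyMeasurable h μI := by
    have hm : StronglyMeasurable (fun p : ℝ × ℝ => K p.1 p.2 * φ N p.2) :=
      (hKmeas.mul ((hφmeas N).comp measurable_snd)).stronglyMeasurable
    exact hm.integral_prod_right'.aestronglyMeasurable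
  have hq_meas : AEStronglyMeasurable (fun t => (h t - κ N * φ N t) ^ 2) μI := by
    have hsub : AEStronglyMeasurable (fun t => h t - κ N * φ N t) μI :=
      hmeas_h.sub (aestronglyMeasurable_const.mul (hφmeas N).aestronglyMeasurable)
    have := hsub.mul hsub
    simpa [pow_two, Pi.mul_def] using this
  have hq_int : Integrable (fun t => (h t - κ N * φ N t) ^ 2) μI := by
    refine (hgint (N + 1)).mono' hq_meas ?_
    filter_upwards [hbound (N + 1) (lt_add_one N)] with t ht
    rw [Real.norm_eq_abs, abs_of_nonneg (sq_nonneg _)]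
    exact ht
  have hq_le : ∀ M, N < M → ∫ t, (h t - κ N * φ N t) ^ 2 ∂μI
      ≤ ∫ p, (K p.1 p.2 - S M p) ^ 2 ∂(μI.prod μI) := by
    intro M hM
    rw [← hgeq M]
    exact integral_mono_ae hq_int (hgint M) (hbound M hM)
  have hq0 : ∫ t, (h t - κ N * φ N t) ^ 2 ∂μI = 0 := by
    have hle : ∫ t, (h t - κ N * φ N t) ^ 2 ∂μI ≤ 0 := by
      refine ge_of_tendsto hKexp ?_
      refine eventually_atTop.2 ⟨N + 1, fun M hM => ?_⟩
      exact hq_le M (lt_of_lt_of_le (lt_add_one N) hM)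
    exact le_antisymm hle (integral_nonneg fun t => sq_nonneg _)
  have hae : ∀ᵐ t ∂μI, (h t - κ N * φ N t) ^ 2 = 0 := by
    have := (integral_eq_zero_iff_of_nonneg (fun t => sq_nonneg _) hq_int).1 hq0
    filter_upwards [this] with t ht
    exact ht
  filter_upwards [hae] with t ht
  have h0 : h t - κ N * φ N t = 0 := pow_eq_zero_iff (n := 2) (by norm_num) |>.1 ht
  have := sub_eq_zero.mp h0
  simpa [hh] using this

/-- Ill-posedness of recovering `b` from `(K, C)`: with `K = Σ_k κ_k φ_k ⊗ φ_k` in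
`L²(I²)` (`{φ_k}` an orthonormal basis, `κ_k > 0`, `Σ κ_k² < ∞`, `κ_k → 0`),
`C(t,s) = ∫ K(t,u) b(s,u) du`, and the perturbations `b^N = b + φ₁ ⊗ φ_N`,
`C^N = C + κ_N φ_N ⊗ φ₁` (here `φ₁` is `φ 0`), one has:
(1) `∫ K(t,u) b^N(s,u) du = C^N(t,s)` a.e.;
(2) `|||C^N − C||| = κ_N`, so `C^N → C` in `L²(I²)`;
(3) `|||b^N − b||| = 1` for every `N`. -/
theorem ill_posedness
    (φ : ℕ → ℝ → ℝ)
    (hφmeas : ∀ k, Measurable (φ k))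
    (hφL2 : ∀ k, MemLp (φ k) 2 μI)
    (hφon : ∀ j k, ip (φ j) (φ k) = if j = k then 1 else 0)
    (hφcomplete : ∀ f : ℝ → ℝ, Measurable f → MemLp f 2 μI →
      (∑' k, (ip f (φ k)) ^ 2) = ∫ t, (f t) ^ 2 ∂μI)
    (κ : ℕ → ℝ) (hκpos : ∀ k, 0 < κ k)
    (hκ2 : Summable (fun k => κ k ^ 2))
    (hκ0 : Tendsto κ atTop (nhds 0))
    (K : ℝ → ℝ → ℝ)
    (hKmeas : Measurable (fun p : ℝ × ℝ => K p.1 p.2))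
    (hKL2 : MemLp (fun p : ℝ × ℝ => K p.1 p.2) 2 (μI.prod μI))
    (hKexp : Tendsto
      (fun N => ∫ p, (K p.1 p.2 - ∑ k ∈ Finset.range N, κ k * φ k p.1 * φ k p.2) ^ 2
        ∂(μI.prod μI)) atTop (nhds 0))
    (b : ℝ → ℝ → ℝ)
    (hbmeas : Measurable (fun p : ℝ × ℝ => b p.1 p.2))
    (hbL2 : MemLp (fun p : ℝ × ℝ => b p.1 p.2) 2 (μI.prod μI)) :
    (∀ N : ℕ, 1 ≤ N → ∀ᵐ p ∂(μI.prod μI),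
      (∫ u, K p.2 u * (b p.1 u + φ 0 p.1 * φ N u) ∂μI)
        = (∫ u, K p.2 u * b p.1 u ∂μI) + κ N * φ N p.2 * φ 0 p.1) ∧
    (∀ N : ℕ, Real.sqrt (∫ p, (κ N * φ N p.2 * φ 0 p.1) ^ 2 ∂(μI.prod μI)) = κ N) ∧
    Tendsto (fun N => ∫ p, (κ N * φ N p.2 * φ 0 p.1) ^ 2 ∂(μI.prod μI))
      atTop (nhds 0) ∧
    (∀ N : ℕ, Real.sqrt (∫ p, (φ 0 p.1 * φ N p.2) ^ 2 ∂(μI.prod μI)) = 1) := by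
  have hφsq : ∀ k, ∫ u, φ k u ^ 2 ∂μI = 1 := by
    intro k
    have := hφon k k
    simp only [if_pos rfl, ip] at this
    simpa [pow_two] using this
  -- separable integrals over the product
  have hsep : ∀ (j k : ℕ) (a : ℝ),
      ∫ p, (a * φ j p.2 * φ k p.1) ^ 2 ∂(μI.prod μI) = a ^ 2 := by
    intro j k a
    have he : (fun p : ℝ × ℝ => (a * φ j p.2 * φ k p.1) ^ 2)
        = fun p : ℝ × ℝ => (a ^ 2 * φ k p.1 ^ 2) * (φ j p.2 ^ 2) := by
      funext p; ring
    calc ∫ p, (a * φ j p.2 * φ k p.1) ^ 2 ∂(μI.prod μI)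
        = (∫ x, a ^ 2 * φ k x ^ 2 ∂μI) * (∫ y, φ j y ^ 2 ∂μI) := by
          rw [he]
          exact integral_prod_mul (f := fun x => a ^ 2 * φ k x ^ 2) (g := fun y => φ j y ^ 2)
      _ = a ^ 2 := by rw [integral_const_mul, hφsq k, hφsq j]; ring
  refine ⟨?_, ?_, ?_, ?_⟩
  · -- part (1)
    intro N _
    have hKey := key_convergence φ hφmeas hφL2 hφon κ K hKmeas hKL2 hKexp N
    have hKsliceL2 : ∀ᵐ t ∂μI, MemLp (fun u => K t u) 2 μI := by
      filter_upwards [hKL2.integrable_sq.prod_right_ae] with t ht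
      exact (memLp_two_iff_integrable_sq
        ((hKmeas.comp measurable_prodMk_left).aestronglyMeasurable (μ := μI))).2 ht
    have hbsliceL2 : ∀ᵐ s ∂μI, MemLp (fun u => b s u) 2 μI := by
      filter_upwards [hbL2.integrable_sq.prod_right_ae] with s hs
      exact (memLp_two_iff_integrable_sq
        ((hbmeas.comp measurable_prodMk_left).aestronglyMeasurable (μ := μI))).2 hs
    filter_upwards [ae_snd_lift (hKey.and hKsliceL2), ae_fst_lift hbsliceL2] with p hp1 hp2
    obtain ⟨hk, hK2⟩ := hp1
    have i1 : Integrable (fun u => K p.2 u * b p.1 u) μI :=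
      integrable_mul_of_memℒp_two hK2 hp2
    have i2 : Integrable (fun u => K p.2 u * φ N u) μI :=
      integrable_mul_of_memℒp_two hK2 (hφL2 N)
    have he : (fun u => K p.2 u * (b p.1 u + φ 0 p.1 * φ N u))
        = fun u => K p.2 u * b p.1 u + φ 0 p.1 * (K p.2 u * φ N u) := by
      funext u; ring
    rw [he, integral_add i1 (i2.const_mul _), integral_const_mul, hk]
    ring
  · -- part (2)
    intro N
    rw [hsep N 0 (κ N)]
    exact Real.sqrt_sq (hκpos N).le
  · -- part (2), convergence
    simp only [hsep]
    have := hκ0.mul hκ0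
    rw [mul_zero] at this
    simpa [pow_two] using this
  · -- part (3)
    intro N
    have he : (fun p : ℝ × ℝ => (φ 0 p.1 * φ N p.2) ^ 2)
        = fun p : ℝ × ℝ => (φ 0 p.1 ^ 2) * (φ N p.2 ^ 2) := by
      funext p; ring
    rw [he]
    rw [show ∫ p, (φ 0 p.1 ^ 2) * (φ N p.2 ^ 2) ∂(μI.prod μI)
        = (∫ x, φ 0 x ^ 2 ∂μI) * (∫ y, φ N y ^ 2 ∂μI) from integral_prod_mul (f := fun x => φ 0 x ^ 2) (g := fun y => φ N y ^ 2),
      hφsq 0, hφsq N, one_mul, Real.sqrt_one]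

end
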